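/- (Backward substitution correctness) Under the tridiagonal setup with all pivots u i nonzero, let U be the n×n upper bidiagonal matrix with U i i = u i, U i (i+1) = c i for i ≤ n−2, and all other entries 0. Let m be any natural number and Y an n×m real matrix. Define the n×m matrix P row-wise by P(n−1,·) = (1/u(n−1)) · Y(n−1,·) and P(i,·) = (1/u i) · (Y(i,·) − c i · P(i+1,·)) for i ≤ n−2. Then U · P = Y. -/

import Mathlib

open Matrix

/-- **Backward substitution correctness.** With the upper bidiagonal matrix `U`
from the Thomas algorithm (all pivots nonzero) and `P` defined row-wise by
`P(n−1,·) = (1/u(n−1)) · Y(n−1,·)` and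
`P(i,·) = (1/u i) · (Y(i,·) − c i · P(i+1,·))` for `i ≤ n−2`, one has
`U · P = Y`. -/
theorem backward_substitution_correct
    (n : ℕ) (hn : 1 ≤ n) (d a c : Fin n → ℝ)
    (u l : Fin n → ℝ)
    (hu0 : ∀ i : Fin n, (i : ℕ) = 0 → u i = d i)
    (hl : ∀ i j : Fin n, (i : ℕ) = (j : ℕ) + 1 → l i = a i / u j)
    (hu : ∀ i j : Fin n, (i : ℕ) = (j : ℕ) + 1 → u i = d i - l i * c j)
    (hpiv : ∀ i : Fin n, u i ≠ 0)
    (U : Matrix (Fin n) (Fin n) ℝ)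
    (hU : ∀ i j : Fin n, U i j =
      if i = j then u i
      else if (j : ℕ) = (i : ℕ) + 1 then c i
      else 0)
    (m : ℕ) (Y P : Matrix (Fin n) (Fin m) ℝ)
    (hPlast : ∀ i : Fin n, (i : ℕ) + 1 = n → ∀ j : Fin m,
      P i j = (1 / u i) * Y i j)
    (hPrec : ∀ i i' : Fin n, (i' : ℕ) = (i : ℕ) + 1 → ∀ j : Fin m,
      P i j = (1 / u i) * (Y i j - c i * P i' j)) :
    U * P = Y := by
  ext i j
  rw [Matrix.mul_apply]
  by_cases h : (i : ℕ) + 1 = n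
  · -- last row
    rw [Finset.sum_eq_single i]
    · rw [hU, if_pos rfl, hPlast i h j]
      field_simp [hpiv i]
    · intro k _ hk
      rw [hU]
      rw [if_neg (Ne.symm (by simpa using hk))]
      rw [if_neg]
      · ring
      · intro hk1
        have := k.isLt
        omega
    · simp
  · have hlt : (i : ℕ) + 1 < n := lt_of_le_of_ne i.isLt (by simpa using h) |>.trans_le le_rfl
    set i' : Fin n := ⟨(i : ℕ) + 1, hlt⟩ with hi'
    have hne : i ≠ i' := by
      intro hh
      have := congrArg Fin.val hh
      simp [hi'] at this
    rw [Finset.sum_eq_add_of_mem i i' (Finset.mem_univ _) (Finset.mem_univ _) hne ?_]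
    · rw [hU, hU, if_pos rfl, if_neg hne, if_pos rfl, hPrec i i' rfl j]
      field_simp [hpiv i]
      ring
    · intro k _ hk
      rw [hU]
      rcases hk with ⟨hk1, hk2⟩
      rw [if_neg (Ne.symm hk1), if_neg]
      · ring
      · intro hc
        exact hk2 (Fin.ext hc)
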